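/- Special Schreier extensions of monoids satisfy the Short Five Lemma: given a commutative diagram of two special Schreier extensions 0 → K → A → B → 0 and 0 → K' → A' → B' → 0 with vertical morphisms a : K → K', b : A → A', c : B → B', if a and c are isomorphisms then b is an isomorphism. -/
import Mathlib


/-- A surjective monoid homomorphism `f` is a special Schreier morphism when every pair
`a, b` with `f a = f b` admits a unique kernel element `k` (`f k = 0`) with `b = k + a`. -/
def IsSpecialSchreier {A B : Type*} [AddMonoid A] [AddMonoid B] (f : A →+ B) : Prop :=
  ∀ a b : A, f a = f b → ∃! k : A, f k = 0 ∧ b = k + a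

/-- The Short Five Lemma for special Schreier extensions of monoids:
if `a` and `c` are isomorphisms, so is `b`. -/
theorem stmt_6 (K A B K' A' B' : Type*)
    [AddMonoid K] [AddMonoid A] [AddMonoid B] [AddMonoid K'] [AddMonoid A'] [AddMonoid B']
    (i : K →+ A) (f : A →+ B) (i' : K' →+ A') (f' : A' →+ B')
    (a : K →+ K') (b : A →+ A') (c : B →+ B')
    -- the rows are short exact sequences of monoids:
    (hi : Function.Injective i) (hf : Function.Surjective f)
    (hker : ∀ x : A, f x = 0 ↔ x ∈ Set.range i)
    (hi' : Function.Injective i') (hf' : Function.Surjective f')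
    (hker' : ∀ x : A', f' x = 0 ↔ x ∈ Set.range i')
    -- the rows are special Schreier extensions:
    (hS : IsSpecialSchreier f) (hS' : IsSpecialSchreier f')
    -- the diagram commutes:
    (hcl : ∀ k : K, b (i k) = i' (a k)) (hcr : ∀ x : A, c (f x) = f' (b x))
    -- `a` and `c` are isomorphisms:
    (ha : Function.Bijective a) (hc : Function.Bijective c) :
    Function.Bijective b := by
  constructor
  · -- injectivity
    intro x y hxy
    have hfxy : f x = f y := by
      apply hc.1
      rw [hcr, hcr, hxy]
    obtain ⟨k, ⟨hk0, hky⟩, _⟩ := hS x y hfxy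
    obtain ⟨m, hm⟩ := (hker k).1 hk0
    -- b x = i' (a m) + b x and b x = 0 + b x, use uniqueness in hS'
    have huniq := hS' (b x) (b x) rfl
    obtain ⟨k', _, hk'u⟩ := huniq
    have h1 : i' (a m) = k' := by
      apply hk'u
      refine ⟨(hker' _).2 ⟨a m, rfl⟩, ?_⟩
      rw [← hcl, hm, ← map_add, ← hky, hxy]
    have h2 : (0 : A') = k' := by
      apply hk'u
      exact ⟨map_zero f', (zero_add _).symm⟩
    have : a m = 0 := hi' (by rw [h1, ← h2, map_zero])
    have : m = 0 := ha.1 (by rw [this, map_zero])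
    rw [hky, ← hm, this, map_zero, zero_add]
  · -- surjectivity
    intro a'
    obtain ⟨β, hβ⟩ := hc.2 (f' a')
    obtain ⟨x, hx⟩ := hf β
    have hfx : f' (b x) = f' a' := by rw [← hcr, hx, hβ]
    obtain ⟨k', ⟨hk'0, hk'⟩, _⟩ := hS' (b x) a' hfx
    obtain ⟨m', hm'⟩ := (hker' k').1 hk'0
    obtain ⟨m, hm⟩ := ha.2 m'
    refine ⟨i m + x, ?_⟩
    rw [map_add, hcl, hm, hm', ← hk']
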